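/- The number M_n of games of plates and olives of length n satisfies M_n ≥ (2n-1)!!. -/

import Mathlib

/-- A plate-add move: an empty plate (a `0`) is put down. -/
def PPlus (a b : Multiset ℕ) : Prop := b = 0 ::ₘ a

/-- A first olive-add move: an olive is put down on an empty plate. -/
def OPlusF (a b : Multiset ℕ) : Prop := (0 : ℕ) ∈ a ∧ b = 1 ::ₘ a.erase 0

/-- A later olive-add move: an olive is put down on a plate already holding olives. -/
def OPlusL (a b : Multiset ℕ) : Prop := ∃ x ∈ a, 0 < x ∧ b = (x + 1) ::ₘ a.erase x

/-- An olive-add move (first or later). -/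
def OPlus (a b : Multiset ℕ) : Prop := OPlusF a b ∨ OPlusL a b

/-- An olive-remove move: an olive is removed from a nonempty plate. -/
def OMinus (a b : Multiset ℕ) : Prop := ∃ x ∈ a, 0 < x ∧ b = (x - 1) ::ₘ a.erase x

/-- A simple plate-remove move: an empty plate is removed. -/
def PMinusS (a b : Multiset ℕ) : Prop := a = 0 ::ₘ b

/-- A complex plate-remove move: the olives on two plates that both have olives
are combined on one of them, and the other plate is removed. -/
def PMinusC (a b : Multiset ℕ) : Prop :=
  ∃ x ∈ a, ∃ y ∈ a.erase x, 0 < x ∧ 0 < y ∧ b = (x + y) ::ₘ (a.erase x).erase y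

/-- A legal move of the game of plates and olives. -/
def Step (a b : Multiset ℕ) : Prop :=
  PPlus a b ∨ OPlus a b ∨ OMinus a b ∨ PMinusS a b ∨ PMinusC a b

/-- A game of plates and olives of length `n`: a sequence of `2n+3`
configurations (multisets recording the number of olives on each plate),
starting and ending at the empty table, linked by `2n+2` legal moves, with no
intermediate return to the empty table. -/
def IsGame (n : ℕ) (P : Fin (2 * n + 2 + 1) → Multiset ℕ) : Prop :=
  P 0 = 0 ∧ P (Fin.last (2 * n + 2)) = 0 ∧
  (∀ i : Fin (2 * n + 2), Step (P i.castSucc) (P i.succ)) ∧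
  (∀ i : Fin (2 * n + 2 + 1), i ≠ 0 → i ≠ Fin.last (2 * n + 2) → P i ≠ 0)

/-- `M n` is the number of games of plates and olives of length `n`. -/
noncomputable def M (n : ℕ) : ℕ := Nat.card {P : Fin (2 * n + 2 + 1) → Multiset ℕ // IsGame n P}

namespace PO

def app (i : ℕ) (r : Multiset ℕ) : Multiset ℕ :=
  match i with
  | 0 => 0 ::ₘ r
  | (k+1) => (k+1) ::ₘ r.erase k

def ok (i : ℕ) (r : Multiset ℕ) : Prop := ∀ k, i = k + 1 → k ∈ r

lemma ok_zero (r : Multiset ℕ) : ok 0 r := by intro k h; omega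

lemma ok_succ {k : ℕ} {r : Multiset ℕ} (h : k ∈ r) : ok (k+1) r := by
  intro j hj
  obtain rfl : k = j := by omega
  exact h

lemma countA {i : ℕ} {r : Multiset ℕ} (h : ok i r) (v : ℕ) :
    (app i r).count v + (if i = v + 1 then 1 else 0)
      = r.count v + (if v = i then 1 else 0) := by
  match i with
  | 0 =>
    simp only [app, Multiset.count_cons]
    split <;> split <;> omega
  | (k+1) =>
    have hk : k ∈ r := h k rfl
    have hc : 1 ≤ r.count k := Multiset.one_le_count_iff_mem.2 hk
    simp only [app, Multiset.count_cons]
    rcases eq_or_ne v k with rfl | hne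
    · rw [Multiset.count_erase_self]
      split <;> split <;> omega
    · rw [Multiset.count_erase_of_ne hne]
      split <;> split <;> omega

end PO
namespace PO

def validIs (s : Multiset ℕ) : Finset ℕ := insert 0 (s.toFinset.image (· + 1))

def upF (s : Multiset ℕ) : Finset (Multiset ℕ) := (validIs s).image (fun i => app i s)

def dnF (s : Multiset ℕ) : Finset (Multiset ℕ) :=
  s.toFinset.image (fun v => if v = 0 then s.erase 0 else (v - 1) ::ₘ s.erase v)

lemma mem_validIs {i : ℕ} {s : Multiset ℕ} : i ∈ validIs s ↔ ok i s := by
  simp only [validIs, Finset.mem_insert, Finset.mem_image, Multiset.mem_toFinset]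
  constructor
  · rintro (rfl | ⟨k, hk, rfl⟩)
    · exact ok_zero s
    · exact ok_succ hk
  · intro h
    match i with
    | 0 => exact Or.inl rfl
    | (k+1) => exact Or.inr ⟨k, h k rfl, rfl⟩

lemma mem_upF {t s : Multiset ℕ} : t ∈ upF s ↔ ∃ i, ok i s ∧ t = app i s := by
  simp only [upF, Finset.mem_image]
  constructor
  · rintro ⟨i, hi, rfl⟩; exact ⟨i, mem_validIs.1 hi, rfl⟩
  · rintro ⟨i, hi, rfl⟩; exact ⟨i, mem_validIs.2 hi, rfl⟩

lemma mem_dnF {r s : Multiset ℕ} : r ∈ dnF s ↔ ∃ i, ok i r ∧ s = app i r := by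
  simp only [dnF, Finset.mem_image, Multiset.mem_toFinset]
  constructor
  · rintro ⟨v, hv, rfl⟩
    match v with
    | 0 =>
      refine ⟨0, ok_zero _, ?_⟩
      simp [app, Multiset.cons_erase hv]
    | (k+1) =>
      rw [if_neg (by omega : ¬ k+1 = 0)]
      refine ⟨k+1, ok_succ (Multiset.mem_cons_self _ _), ?_⟩
      simp only [app, Nat.add_sub_cancel]
      rw [Multiset.erase_cons_head, Multiset.cons_erase hv]
  · rintro ⟨i, hi, rfl⟩
    match i with
    | 0 => exact ⟨0, by simp [app], by simp [app]⟩
    | (k+1) =>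
      have hk : k ∈ r := hi k rfl
      refine ⟨k+1, by simp [app], ?_⟩
      rw [if_neg (by omega : ¬ k+1 = 0)]
      simp only [app, Nat.add_sub_cancel]
      rw [Multiset.erase_cons_head]
      exact Multiset.cons_erase hk

lemma app_inj {i j : ℕ} {s : Multiset ℕ} (hi : ok i s) (hj : ok j s)
    (h : app i s = app j s) : i = j := by
  by_contra hne
  have h1 := countA hi i
  have h2 := countA hj i
  rw [h] at h1
  split at h1 <;> split at h1 <;> split at h2 <;> omega

end PO
namespace PO

lemma card_dnF_le (s : Multiset ℕ) : (dnF s).card ≤ s.toFinset.card := Finset.card_image_le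

lemma card_upF (s : Multiset ℕ) : (upF s).card = s.toFinset.card + 1 := by
  rw [upF, Finset.card_image_of_injOn (fun i hi j hj h =>
    app_inj (mem_validIs.1 hi) (mem_validIs.1 hj) h)]
  rw [validIs, Finset.card_insert_of_notMem (by simp), Finset.card_image_of_injective _
    (fun a b h => by omega)]

lemma card_diag (s : Multiset ℕ) : (dnF s).card + 1 ≤ (upF s).card := by
  rw [card_upF]; have := card_dnF_le s; omega

lemma card_key (s s' : Multiset ℕ) :
    (dnF s ∩ dnF s').card + (if s = s' then 1 else 0) ≤ (upF s ∩ upF s').card := by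
  rcases eq_or_ne s s' with rfl | hne
  · simpa using card_diag s
  · rw [if_neg hne, add_zero]
    apply Finset.card_le_card_of_injOn (fun r => s + s' - r)
    · intro r hr
      obtain ⟨hr1, hr2⟩ := Finset.mem_inter.1 hr
      obtain ⟨i, hi, hs⟩ := mem_dnF.1 hr1
      obtain ⟨i', hi', hs'⟩ := mem_dnF.1 hr2
      have hii : i ≠ i' := by rintro rfl; exact hne (hs.trans hs'.symm)
      have A1 : ∀ v, s.count v + (if i = v + 1 then 1 else 0)
          = r.count v + (if v = i then 1 else 0) := by
        intro v; rw [hs]; exact countA hi v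
      have A2 : ∀ v, s'.count v + (if i' = v + 1 then 1 else 0)
          = r.count v + (if v = i' then 1 else 0) := by
        intro v; rw [hs']; exact countA hi' v
      have okis' : ok i' s := by
        intro k hk
        have h1 := A1 k
        have hrk : 1 ≤ r.count k := Multiset.one_le_count_iff_mem.2 (hi' k hk)
        rw [← Multiset.one_le_count_iff_mem]
        have hik : ¬ i = k + 1 := by rw [← hk]; exact hii
        split_ifs at h1 <;> omega
      have okis : ok i s' := by
        intro k hk
        have h2 := A2 k
        have hrk : 1 ≤ r.count k := Multiset.one_le_count_iff_mem.2 (hi k hk)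
        rw [← Multiset.one_le_count_iff_mem]
        have hik : ¬ i' = k + 1 := by rw [← hk]; exact fun h => hii h.symm
        split_ifs at h2 <;> omega
      have teq : s + s' - r = app i' s := by
        ext v
        have h1 := A1 v
        have h2 := A2 v
        have h3 := countA okis' v
        rw [Multiset.count_sub, Multiset.count_add]
        split_ifs at h1 h2 h3 <;> omega
      have teq2 : s + s' - r = app i s' := by
        ext v
        have h1 := A1 v
        have h2 := A2 v
        have h3 := countA okis v
        rw [Multiset.count_sub, Multiset.count_add]
        split_ifs at h1 h2 h3 <;> omega
      exact Finset.mem_inter.2 ⟨mem_upF.2 ⟨i', okis', teq⟩, mem_upF.2 ⟨i, okis, teq2⟩⟩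
    · intro r1 hr1 r2 hr2 heq
      obtain ⟨hr11, hr12⟩ := Finset.mem_inter.1 hr1
      obtain ⟨hr21, hr22⟩ := Finset.mem_inter.1 hr2
      obtain ⟨i1, hi1, hs1⟩ := mem_dnF.1 hr11
      obtain ⟨i1', hi1', hs1'⟩ := mem_dnF.1 hr12
      obtain ⟨i2, hi2, hs2⟩ := mem_dnF.1 hr21
      obtain ⟨i2', hi2', hs2'⟩ := mem_dnF.1 hr22
      have hii1 : i1 ≠ i1' := by rintro rfl; exact hne (hs1.trans hs1'.symm)
      have hii2 : i2 ≠ i2' := by rintro rfl; exact hne (hs2.trans hs2'.symm)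
      ext v
      have e11 : s.count v + (if i1 = v + 1 then 1 else 0)
          = r1.count v + (if v = i1 then 1 else 0) := by rw [hs1]; exact countA hi1 v
      have e12 : s'.count v + (if i1' = v + 1 then 1 else 0)
          = r1.count v + (if v = i1' then 1 else 0) := by rw [hs1']; exact countA hi1' v
      have e21 : s.count v + (if i2 = v + 1 then 1 else 0)
          = r2.count v + (if v = i2 then 1 else 0) := by rw [hs2]; exact countA hi2 v
      have e22 : s'.count v + (if i2' = v + 1 then 1 else 0)
          = r2.count v + (if v = i2' then 1 else 0) := by rw [hs2']; exact countA hi2' v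
      have hc := congrArg (Multiset.count v) heq
      rw [Multiset.count_sub, Multiset.count_add, Multiset.count_sub, Multiset.count_add] at hc
      split_ifs at e11 e12 e21 e22 <;> omega

end PO
namespace PO

def Uop (v : Multiset ℕ → ℕ) (s : Multiset ℕ) : ℕ := ∑ r ∈ dnF s, v r
def Dop (v : Multiset ℕ → ℕ) (s : Multiset ℕ) : ℕ := ∑ t ∈ upF s, v t

lemma updn {t r : Multiset ℕ} : t ∈ upF r ↔ r ∈ dnF t := by rw [mem_upF, mem_dnF]

lemma double_sum (B : Finset (Multiset ℕ)) (nb : Multiset ℕ → Finset (Multiset ℕ))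
    (v : Multiset ℕ → ℕ) :
    ∑ r ∈ B, ∑ t ∈ nb r, v t
      = ∑ t ∈ B.biUnion nb, (B.filter (fun r => t ∈ nb r)).card * v t := by
  have h1 : ∀ r ∈ B, ∑ t ∈ nb r, v t = ∑ t ∈ B.biUnion nb, if t ∈ nb r then v t else 0 := by
    intro r hr
    rw [Finset.sum_ite_mem]
    congr 1
    exact (Finset.inter_eq_right.2 fun t ht => Finset.mem_biUnion.2 ⟨r, hr, ht⟩).symm
  rw [Finset.sum_congr rfl h1, Finset.sum_comm]
  refine Finset.sum_congr rfl fun t ht => ?_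
  rw [← Finset.sum_filter, Finset.sum_const, smul_eq_mul]

lemma key (v : Multiset ℕ → ℕ) (s' : Multiset ℕ) :
    Uop (Dop v) s' + v s' ≤ Dop (Uop v) s' := by
  have hL : Uop (Dop v) s' = ∑ t ∈ (dnF s').biUnion upF, (dnF s' ∩ dnF t).card * v t := by
    rw [Uop]
    simp only [Dop]
    rw [double_sum]
    refine Finset.sum_congr rfl fun t ht => ?_
    congr 2
    rw [← Finset.filter_mem_eq_inter]
    exact Finset.filter_congr fun r hr => by rw [updn]
  have hR : Dop (Uop v) s' = ∑ r ∈ (upF s').biUnion dnF, (upF s' ∩ upF r).card * v r := by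
    rw [Dop]
    simp only [Uop]
    rw [double_sum]
    refine Finset.sum_congr rfl fun r hr => ?_
    congr 2
    rw [← Finset.filter_mem_eq_inter]
    exact Finset.filter_congr fun t ht => by rw [← updn]
  rw [hL, hR]
  set T := (dnF s').biUnion upF with hT
  set A := insert s' T with hA
  have step1 : ∑ t ∈ T, (dnF s' ∩ dnF t).card * v t + v s'
      ≤ ∑ t ∈ A, ((dnF s' ∩ dnF t).card + if s' = t then 1 else 0) * v t := by
    have h2 : ∑ t ∈ A, ((dnF s' ∩ dnF t).card + if s' = t then 1 else 0) * v t
        = ∑ t ∈ A, (dnF s' ∩ dnF t).card * v t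
          + ∑ t ∈ A, (if s' = t then v t else 0) := by
      rw [← Finset.sum_add_distrib]
      refine Finset.sum_congr rfl fun t _ => ?_
      split <;> ring
    rw [h2]
    have h3 : ∑ t ∈ A, (if s' = t then v t else 0) = v s' := by
      rw [Finset.sum_ite_eq]
      simp [hA]
    rw [h3]
    exact Nat.add_le_add_right
      (Finset.sum_le_sum_of_subset (Finset.subset_insert _ _)) _
  have step2 : ∑ t ∈ A, ((dnF s' ∩ dnF t).card + if s' = t then 1 else 0) * v t
      ≤ ∑ t ∈ A, (upF s' ∩ upF t).card * v t := by
    refine Finset.sum_le_sum fun t _ => Nat.mul_le_mul_right _ ?_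
    have := card_key s' t
    split_ifs at this ⊢ <;> omega
  have step3 : ∑ t ∈ A, (upF s' ∩ upF t).card * v t
      ≤ ∑ r ∈ (upF s').biUnion dnF, (upF s' ∩ upF r).card * v r := by
    refine Finset.sum_le_sum_of_ne_zero fun t _ h => ?_
    have hc : (upF s' ∩ upF t).card ≠ 0 := fun h0 => h (by rw [h0, zero_mul])
    obtain ⟨u, hu⟩ := Finset.card_ne_zero.1 hc |>.exists_mem
    obtain ⟨hu1, hu2⟩ := Finset.mem_inter.1 hu
    exact Finset.mem_biUnion.2 ⟨u, hu1, updn.1 hu2⟩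
  exact le_trans step1 (le_trans step2 step3)

end PO
namespace PO

def wt (s : Multiset ℕ) : ℕ := Multiset.card s + s.sum

lemma wt_app {i : ℕ} {r : Multiset ℕ} (h : ok i r) : wt (app i r) = wt r + 1 := by
  match i with
  | 0 => simp [app, wt]; ring
  | (k+1) =>
    have hk : k ∈ r := h k rfl
    have := Multiset.cons_erase hk
    simp only [app, wt, Multiset.card_cons, Multiset.sum_cons]
    have hcard : Multiset.card (r.erase k) + 1 = Multiset.card r := by
      rw [← this]; simp
    have hsum : (r.erase k).sum + k = r.sum := by
      conv_rhs => rw [← this]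
      simp [Multiset.sum_cons]; ring
    omega

lemma wt_up {t s : Multiset ℕ} (h : t ∈ upF s) : wt t = wt s + 1 := by
  obtain ⟨i, hi, rfl⟩ := mem_upF.1 h
  exact wt_app hi

lemma disj_updn (s : Multiset ℕ) : Disjoint (dnF s) (upF s) := by
  rw [Finset.disjoint_left]
  intro t ht hu
  have h1 := wt_up hu
  have h2 := wt_up (updn.2 ht)
  omega

def WkF : ℕ → Multiset ℕ → Finset (List (Multiset ℕ))
  | 0, s => if s = 0 then {[(0 : Multiset ℕ)]} else ∅
  | (m+1), s => (dnF s ∪ upF s).biUnion (fun r => (WkF m r).image (List.cons s))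

lemma wk_head {m : ℕ} {s : Multiset ℕ} {l : List (Multiset ℕ)} (h : l ∈ WkF m s) :
    ∃ tl, l = s :: tl := by
  match m with
  | 0 =>
    rw [WkF] at h
    split at h
    · simp only [Finset.mem_singleton] at h
      subst h; exact ⟨[], by simp_all⟩
    · simp at h
  | (m+1) =>
    rw [WkF] at h
    obtain ⟨r, hr, hl⟩ := Finset.mem_biUnion.1 h
    obtain ⟨l', hl', rfl⟩ := Finset.mem_image.1 hl
    exact ⟨l', rfl⟩

def f (m : ℕ) (s : Multiset ℕ) : ℕ := (WkF m s).card

lemma frec (m : ℕ) (s : Multiset ℕ) : f (m+1) s = Uop (f m) s + Dop (f m) s := by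
  rw [f, WkF, Finset.card_biUnion, Finset.sum_union (disj_updn s)]
  · rw [Uop, Dop]
    congr 1 <;> exact Finset.sum_congr rfl fun r _ =>
      Finset.card_image_of_injective _ (fun a b h => by injection h)
  · intro r hr r' hr' hne
    rw [Function.onFun, Finset.disjoint_left]
    rintro l hl hl'
    obtain ⟨l1, hl1, rfl⟩ := Finset.mem_image.1 hl
    obtain ⟨l2, hl2, he⟩ := Finset.mem_image.1 hl'
    obtain ⟨t1, rfl⟩ := wk_head hl1
    obtain ⟨t2, h2⟩ := wk_head hl2
    apply hne
    rw [h2] at he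
    injection he with he1 he2
    injection he2 with h3 h4
    exact h3.symm

lemma frec' (m : ℕ) : f (m+1) = fun s => Uop (f m) s + Dop (f m) s := funext (frec m)

lemma Dop_add (v w : Multiset ℕ → ℕ) (s : Multiset ℕ) :
    Dop (fun x => v x + w x) s = Dop v s + Dop w s := Finset.sum_add_distrib
lemma Uop_mono {v w : Multiset ℕ → ℕ} (h : ∀ x, v x ≤ w x) (s : Multiset ℕ) :
    Uop v s ≤ Uop w s := Finset.sum_le_sum fun x _ => h x
lemma Dop_mono {v w : Multiset ℕ → ℕ} (h : ∀ x, v x ≤ w x) (s : Multiset ℕ) :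
    Dop v s ≤ Dop w s := Finset.sum_le_sum fun x _ => h x
lemma Uop_mul (c : ℕ) (v : Multiset ℕ → ℕ) (s : Multiset ℕ) :
    Uop (fun x => c * v x) s = c * Uop v s := (Finset.mul_sum _ _ _).symm
lemma Dop_mul (c : ℕ) (v : Multiset ℕ → ℕ) (s : Multiset ℕ) :
    Dop (fun x => c * v x) s = c * Dop v s := (Finset.mul_sum _ _ _).symm

lemma Dop_ge : ∀ m s, (m+1) * f m s ≤ Dop (f (m+1)) s := by
  intro m
  induction m with
  | zero =>
    intro s
    rw [frec' 0, Dop_add]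
    calc 1 * f 0 s = f 0 s := one_mul _
    _ ≤ Uop (Dop (f 0)) s + f 0 s := Nat.le_add_left _ _
    _ ≤ Dop (Uop (f 0)) s := key (f 0) s
    _ ≤ Dop (Uop (f 0)) s + Dop (Dop (f 0)) s := Nat.le_add_right _ _
  | succ m ih =>
    intro s
    rw [frec' (m+1), Dop_add]
    have h1 : Uop (Dop (f (m+1))) s + f (m+1) s ≤ Dop (Uop (f (m+1))) s := key _ s
    have h2 : Uop (fun x => (m+1) * f m x) s ≤ Uop (Dop (f (m+1))) s :=
      Uop_mono (fun x => ih x) s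
    have h3 : Dop (fun x => (m+1) * f m x) s ≤ Dop (Dop (f (m+1))) s :=
      Dop_mono (fun x => ih x) s
    rw [Uop_mul] at h2
    rw [Dop_mul] at h3
    have h4 : (m + 1 + 1) * f (m+1) s
        = (m+1) * Uop (f m) s + ((m+1) * Dop (f m) s + f (m+1) s) := by
      rw [frec]; ring
    omega

lemma f_ge (n : ℕ) : Nat.doubleFactorial (2 * n - 1) ≤ f (2 * n) 0 := by
  induction n with
  | zero => simp [f, WkF, Nat.doubleFactorial]
  | succ n ih =>
    have h1 : 2 * (n + 1) = (2 * n + 1) + 1 := by ring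
    have h2 : Dop (f (2 * n + 1)) 0 ≤ f (2 * (n+1)) 0 := by
      rw [h1, frec]; omega
    have h3 : (2 * n + 1) * f (2 * n) 0 ≤ Dop (f (2 * n + 1)) 0 := Dop_ge (2 * n) 0
    have h4 : Nat.doubleFactorial (2 * (n + 1) - 1)
        = (2 * n + 1) * Nat.doubleFactorial (2 * n - 1) := by
      match n with
      | 0 => simp [Nat.doubleFactorial]
      | (k+1) =>
        have e1 : 2 * (k + 1 + 1) - 1 = (2 * k + 1) + 2 := by omega
        have e2 : 2 * (k + 1) - 1 = 2 * k + 1 := by omega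
        rw [e1, e2, Nat.doubleFactorial_add_two]
        have e3 : 2 * k + 1 + 2 = 2 * (k + 1) + 1 := by omega
        rw [e3]
    rw [h4]
    calc (2 * n + 1) * Nat.doubleFactorial (2 * n - 1)
        ≤ (2 * n + 1) * f (2 * n) 0 := Nat.mul_le_mul_left _ ih
    _ ≤ Dop (f (2 * n + 1)) 0 := h3
    _ ≤ f (2 * (n+1)) 0 := h2

end PO
namespace PO

set_option linter.unusedVariables false

lemma wk_length : ∀ (m : ℕ) (s : Multiset ℕ) (l : List (Multiset ℕ)),
    l ∈ WkF m s → l.length = m + 1 := by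
  intro m
  induction m with
  | zero =>
    intro s l h
    rw [WkF] at h
    split at h
    · simp only [Finset.mem_singleton] at h; subst h; rfl
    · simp at h
  | succ m ih =>
    intro s l h
    rw [WkF] at h
    obtain ⟨r, hr, hl⟩ := Finset.mem_biUnion.1 h
    obtain ⟨l', hl', rfl⟩ := Finset.mem_image.1 hl
    simp [ih r l' hl']

lemma wk_last : ∀ (m : ℕ) (s : Multiset ℕ) (l : List (Multiset ℕ)),
    l ∈ WkF m s → l[m]? = some 0 := by
  intro m
  induction m with
  | zero =>
    intro s l h
    rw [WkF] at h
    split at h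
    · simp only [Finset.mem_singleton] at h; subst h; simp_all
    · simp at h
  | succ m ih =>
    intro s l h
    rw [WkF] at h
    obtain ⟨r, hr, hl⟩ := Finset.mem_biUnion.1 h
    obtain ⟨l', hl', rfl⟩ := Finset.mem_image.1 hl
    rw [List.getElem?_cons_succ]
    exact ih r l' hl'

lemma wk_rel : ∀ (m : ℕ) (s : Multiset ℕ) (l : List (Multiset ℕ)),
    l ∈ WkF m s → ∀ k, k + 1 ≤ m →
      ∃ a b, l[k]? = some a ∧ l[k+1]? = some b ∧ b ∈ dnF a ∪ upF a := by
  intro m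
  induction m with
  | zero => intro s l h k hk; omega
  | succ m ih =>
    intro s l h k hk
    rw [WkF] at h
    obtain ⟨r, hr, hl⟩ := Finset.mem_biUnion.1 h
    obtain ⟨l', hl', rfl⟩ := Finset.mem_image.1 hl
    match k with
    | 0 =>
      obtain ⟨tl, rfl⟩ := wk_head hl'
      exact ⟨s, r, rfl, rfl, hr⟩
    | (k+1) =>
      obtain ⟨a, b, h1, h2, h3⟩ := ih r l' hl' k (by omega)
      exact ⟨a, b, h1, h2, h3⟩

lemma step_up {x y : Multiset ℕ} (h : y ∈ upF x) : Step (0 ::ₘ x) (0 ::ₘ y) := by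
  obtain ⟨i, hi, rfl⟩ := mem_upF.1 h
  match i with
  | 0 => exact Or.inl rfl
  | 1 =>
    have h0 : (0 : ℕ) ∈ x := hi 0 rfl
    refine Or.inr (Or.inl (Or.inl ⟨Multiset.mem_cons_self _ _, ?_⟩))
    rw [Multiset.erase_cons_head]
    show (0 : ℕ) ::ₘ app 1 x = 1 ::ₘ x
    simp only [app]
    conv_rhs => rw [← Multiset.cons_erase h0]
    rw [Multiset.cons_swap]
  | (k+2) =>
    have hk : k + 1 ∈ x := hi (k+1) rfl
    refine Or.inr (Or.inl (Or.inr ⟨k+1, Multiset.mem_cons_of_mem hk, by omega, ?_⟩))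
    rw [Multiset.erase_cons_tail_of_mem hk]
    show (0 : ℕ) ::ₘ app (k+2) x = (k + 1 + 1) ::ₘ 0 ::ₘ x.erase (k+1)
    simp only [app]
    rw [Multiset.cons_swap]

lemma step_dn {x y : Multiset ℕ} (h : y ∈ dnF x) : Step (0 ::ₘ x) (0 ::ₘ y) := by
  obtain ⟨i, hi, rfl⟩ := mem_dnF.1 h
  match i with
  | 0 =>
    refine Or.inr (Or.inr (Or.inr (Or.inl ?_)))
    show (0:ℕ) ::ₘ app 0 y = 0 ::ₘ 0 ::ₘ y
    rfl
  | (k+1) =>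
    have hk : k ∈ y := hi k rfl
    refine Or.inr (Or.inr (Or.inl ⟨k+1, ?_, by omega, ?_⟩))
    · exact Multiset.mem_cons_of_mem (by simp [app])
    · show (0:ℕ) ::ₘ y = (k + 1 - 1) ::ₘ ((0:ℕ) ::ₘ app (k+1) y).erase (k+1)
      simp only [app, Nat.add_sub_cancel]
      rw [Multiset.erase_cons_tail_of_mem (by simp), Multiset.erase_cons_head,
        Multiset.cons_swap]
      congr 1
      exact (Multiset.cons_erase hk).symm

def toGame (n : ℕ) (l : List (Multiset ℕ)) : Fin (2 * n + 2 + 1) → Multiset ℕ :=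
  fun j => if j.val = 0 ∨ j.val = 2 * n + 2 then 0 else (0 : ℕ) ::ₘ l.getD (j.val - 1) 0

lemma toGame_isGame (n : ℕ) (l : List (Multiset ℕ)) (hl : l ∈ WkF (2 * n) 0) :
    IsGame n (toGame n l) := by
  have hlen : l.length = 2 * n + 1 := wk_length _ _ _ hl
  obtain ⟨tl, hhead⟩ := wk_head hl
  refine ⟨by simp [toGame], by simp [toGame], ?_, ?_⟩
  · intro i
    have hi2 : i.val < 2 * n + 2 := i.isLt
    have hc : (i.castSucc : Fin (2*n+2+1)).val = i.val := rfl
    have hs : (i.succ : Fin (2*n+2+1)).val = i.val + 1 := rfl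
    rcases Nat.eq_zero_or_pos i.val with h0 | hpos
    · -- first step : PPlus
      have ha : toGame n l i.castSucc = 0 := by simp [toGame, hc, h0]
      have hb : toGame n l i.succ = (0:ℕ) ::ₘ l.getD 0 0 := by
        rw [toGame]
        rw [if_neg (by omega)]
        simp [hs, h0]
      rw [ha, hb]
      left
      show (0:ℕ) ::ₘ l.getD 0 0 = 0 ::ₘ 0
      rw [hhead]
      rfl
    · rcases eq_or_ne i.val (2 * n + 1) with hlast | hmid
      · -- last step : PMinusS
        have ha : toGame n l i.castSucc = (0:ℕ) ::ₘ l.getD (2*n) 0 := by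
          rw [toGame, if_neg (by omega)]
          rw [hc, hlast]
          norm_num
        have hb : toGame n l i.succ = 0 := by
          rw [toGame, if_pos (by omega)]
        rw [ha, hb]
        refine Or.inr (Or.inr (Or.inr (Or.inl ?_)))
        have hz : l.getD (2*n) 0 = 0 := by
          rw [List.getD_eq_getElem?_getD, wk_last _ _ _ hl]
          rfl
        show (0:ℕ) ::ₘ l.getD (2*n) 0 = 0 ::ₘ 0
        rw [hz]
      · -- middle step
        obtain ⟨a, b, h1, h2, h3⟩ := wk_rel _ _ _ hl (i.val - 1) (by omega)
        have ha : toGame n l i.castSucc = (0:ℕ) ::ₘ a := by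
          rw [toGame, if_neg (by omega), hc, List.getD_eq_getElem?_getD, h1]
          rfl
        have hb : toGame n l i.succ = (0:ℕ) ::ₘ b := by
          rw [toGame, if_neg (by omega), hs]
          have : i.val + 1 - 1 = (i.val - 1) + 1 := by omega
          rw [this, List.getD_eq_getElem?_getD, h2]
          rfl
        rw [ha, hb]
        rcases Finset.mem_union.1 h3 with hd | hu
        · exact step_dn hd
        · exact step_up hu
  · intro j hj0 hjl
    have h0 : j.val ≠ 0 := by intro h; apply hj0; ext; simp [h]
    have h1 : j.val ≠ 2 * n + 2 := by intro h; apply hjl; ext; simp [h]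
    rw [toGame, if_neg (by omega)]
    exact Multiset.cons_ne_zero

lemma toGame_inj (n : ℕ) : ∀ l1 ∈ WkF (2*n) 0, ∀ l2 ∈ WkF (2*n) 0,
    toGame n l1 = toGame n l2 → l1 = l2 := by
  intro l1 h1 l2 h2 heq
  have hlen1 : l1.length = 2 * n + 1 := wk_length _ _ _ h1
  have hlen2 : l2.length = 2 * n + 1 := wk_length _ _ _ h2
  apply List.ext_get (hlen1.trans hlen2.symm)
  intro k hk1 hk2
  have hk : k < 2 * n + 1 := by omega
  have := congrFun heq ⟨k + 1, by omega⟩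
  rw [toGame, toGame, if_neg (by simp; omega), if_neg (by simp; omega)] at this
  simp only [Nat.add_sub_cancel] at this
  rw [Multiset.cons_inj_right] at this
  rw [List.get_eq_getElem, List.get_eq_getElem, ← List.getD_eq_getElem _ 0 hk1,
    ← List.getD_eq_getElem _ 0 hk2]
  simpa using this

end PO

namespace PO

lemma wt_cons (a : ℕ) (s : Multiset ℕ) : wt (a ::ₘ s) = wt s + a + 1 := by
  simp [wt]; ring

lemma step_wt {a b : Multiset ℕ} (h : Step a b) : wt b ≤ wt a + 1 := by
  rcases h with h | h | h | h | h
  · rw [h, wt_cons]; try omega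
  · rcases h with ⟨h0, h⟩ | ⟨x, hx, hpos, h⟩
    · rw [h, wt_cons]
      conv_rhs => rw [← Multiset.cons_erase h0, wt_cons]
      try omega
    · rw [h, wt_cons]
      conv_rhs => rw [← Multiset.cons_erase hx, wt_cons]
      try omega
  · obtain ⟨x, hx, hpos, h⟩ := h
    rw [h, wt_cons]
    conv_rhs => rw [← Multiset.cons_erase hx, wt_cons]
    try omega
  · rw [h, wt_cons]; try omega
  · obtain ⟨x, hx, y, hy, hx0, hy0, h⟩ := h
    rw [h, wt_cons]
    conv_rhs => rw [← Multiset.cons_erase hx, wt_cons, ← Multiset.cons_erase hy, wt_cons]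
    try omega

lemma game_bound {n : ℕ} {P : Fin (2*n+2+1) → Multiset ℕ} (hP : IsGame n P) :
    ∀ j : Fin (2*n+2+1), wt (P j) ≤ 2*n+2 := by
  obtain ⟨h0, hlast, hstep, hne⟩ := hP
  have key : ∀ k (hk : k < 2*n+2+1), wt (P ⟨k, hk⟩) ≤ k := by
    intro k
    induction k with
    | zero =>
      intro hk
      have e : (⟨0, hk⟩ : Fin (2*n+2+1)) = 0 := rfl
      rw [e, h0]
      simp [wt]
    | succ k ih =>
      intro hk
      have hk' : k < 2*n+2 := by omega
      have hs := hstep ⟨k, hk'⟩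
      have e1 : (⟨k, hk'⟩ : Fin (2*n+2)).castSucc = (⟨k, by omega⟩ : Fin (2*n+2+1)) := rfl
      have e2 : (⟨k, hk'⟩ : Fin (2*n+2)).succ = (⟨k+1, hk⟩ : Fin (2*n+2+1)) := rfl
      rw [e1, e2] at hs
      have h1 := step_wt hs
      have h2 := ih (by omega)
      omega
  intro j
  have h := key j.val j.isLt
  rw [Fin.eta] at h
  have := j.isLt
  omega

lemma conf_le {n : ℕ} {s : Multiset ℕ} (h : wt s ≤ 2*n+2) :
    s ≤ (2*n+2) • Multiset.range (2*n+3) := by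
  have hw : Multiset.card s + s.sum ≤ 2*n+2 := h
  rw [Multiset.le_iff_count]
  intro a
  rw [Multiset.count_nsmul]
  by_cases ha : a ∈ s
  · have h1 : a ≤ s.sum := Multiset.single_le_sum (fun _ _ => Nat.zero_le _) a ha
    have h2 : s.count a ≤ Multiset.card s := Multiset.count_le_card a s
    have h3 : a ∈ Multiset.range (2*n+3) := Multiset.mem_range.2 (by omega)
    have h4 : (Multiset.range (2*n+3)).count a = 1 :=
      Multiset.count_eq_one_of_mem (Multiset.nodup_range _) h3
    rw [h4]
    omega
  · rw [Multiset.count_eq_zero_of_notMem ha]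
    exact Nat.zero_le _

lemma game_finite (n : ℕ) : Finite {P : Fin (2*n+2+1) → Multiset ℕ // IsGame n P} := by
  have hle : ∀ (P : Fin (2*n+2+1) → Multiset ℕ) (hP : IsGame n P) (j),
      P j ∈ ((2*n+2) • Multiset.range (2*n+3)).powerset.toFinset := by
    intro P hP j
    rw [Multiset.mem_toFinset, Multiset.mem_powerset]
    exact conf_le (game_bound hP j)
  apply Finite.of_injective (fun P : {P : Fin (2*n+2+1) → Multiset ℕ // IsGame n P} =>
    (fun j => (⟨P.1 j, hle P.1 P.2 j⟩ :
      {x // x ∈ ((2*n+2) • Multiset.range (2*n+3)).powerset.toFinset})))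
  intro P Q h
  apply Subtype.ext
  funext j
  exact congrArg Subtype.val (congrFun h j)

end PO

open PO in
theorem stmt_10 (n : ℕ) : Nat.doubleFactorial (2 * n - 1) ≤ M n := by
  haveI := game_finite n
  have hinj : Function.Injective (fun l : {l // l ∈ WkF (2*n) 0} =>
      (⟨toGame n l.1, toGame_isGame n l.1 l.2⟩ :
        {P : Fin (2*n+2+1) → Multiset ℕ // IsGame n P})) := by
    intro l1 l2 h
    apply Subtype.ext
    exact toGame_inj n l1.1 l1.2 l2.1 l2.2 (congrArg Subtype.val h)
  have h1 : Nat.card {l // l ∈ WkF (2*n) 0}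
      ≤ Nat.card {P : Fin (2*n+2+1) → Multiset ℕ // IsGame n P} :=
    Nat.card_le_card_of_injective _ hinj
  have h2 : Nat.card {l // l ∈ WkF (2*n) 0} = f (2*n) 0 := Nat.card_eq_finsetCard _
  calc Nat.doubleFactorial (2*n-1) ≤ f (2*n) 0 := f_ge n
  _ = Nat.card {l // l ∈ WkF (2*n) 0} := h2.symm
  _ ≤ Nat.card {P : Fin (2*n+2+1) → Multiset ℕ // IsGame n P} := h1
  _ = M n := rfl
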